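/- Define a_n = sum over (p,q) with p+q=n of a^p * b^q * binomial(n,p)^2, for complex numbers a, b. Then for all n ≥ 2, n*a_n - (2n-1)*(a+b)*a_{n-1} + (n-1)*(a-b)^2*a_{n-2} = 0. -/

import Mathlib

private lemma choose_rel (k p : ℕ) :
    ((p : ℂ) + 1) * (k.choose (p + 1) : ℂ) = ((k : ℂ) - p) * (k.choose p : ℂ) := by
  rcases le_or_gt p k with h | h
  · have h0 := Nat.choose_succ_right_eq k p
    have h2 := congrArg (fun m : ℕ => (m : ℂ)) h0
    push_cast [Nat.cast_sub h] at h2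
    linear_combination h2
  · rw [Nat.choose_eq_zero_of_lt h, Nat.choose_eq_zero_of_lt (by omega)]
    simp

set_option maxHeartbeats 1000000 in
private lemma key_alg (x y z c q : ℂ) (hq1 : q + 1 ≠ 0) (hq2 : q + 2 ≠ 0)
    (h1 : (q + 1) * y = (c - q) * x) (h2 : (q + 2) * z = (c - q - 1) * y) :
    (c + 2) * (x + 2 * y + z) ^ 2 - (2 * c + 3) * ((x + y) ^ 2 + (y + z) ^ 2)
      + (c + 1) * (x ^ 2 - 2 * y ^ 2 + z ^ 2) = 0 := by
  have h : (q + 2) * ((c + 2) * (x + 2 * y + z) ^ 2 - (2 * c + 3) * ((x + y) ^ 2 + (y + z) ^ 2)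
      + (c + 1) * (x ^ 2 - 2 * y ^ 2 + z ^ 2)) = 0 := by
    linear_combination (-2 * (c + 1) * y) * h1 + (2 * (y + (c + 2) * x)) * h2
  rcases mul_eq_zero.mp h with h' | h'
  · exact absurd h' hq2
  · exact h'

set_option maxHeartbeats 1000000 in
theorem recurrence_N2 (a b : ℂ) (f : ℕ → ℂ)
    (hf : ∀ n : ℕ, f n = ∑ pq ∈ Finset.HasAntidiagonal.antidiagonal n,
      a ^ pq.1 * b ^ pq.2 * ((n.choose pq.1 : ℂ)) ^ 2) :
    ∀ n : ℕ, 2 ≤ n →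
      (n : ℂ) * f n - (2 * (n : ℂ) - 1) * (a + b) * f (n - 1)
        + ((n : ℂ) - 1) * (a - b) ^ 2 * f (n - 2) = 0 := by
  have hf' : ∀ m : ℕ, f m = ∑ p ∈ Finset.range (m + 1),
      a ^ p * b ^ (m - p) * ((m.choose p : ℂ)) ^ 2 := by
    intro m
    rw [hf, Finset.Nat.sum_antidiagonal_eq_sum_range_succ_mk]
  intro n hn
  obtain ⟨k, rfl⟩ : ∃ k, n = k + 2 := ⟨n - 2, by omega⟩
  have h1 : k + 2 - 1 = k + 1 := by omega
  have h2 : k + 2 - 2 = k := by omega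
  rw [h1, h2, hf', hf', hf']
  set w1 : ℕ → ℂ := fun p => if p = 0 then 0 else (((k+1).choose (p-1) : ℕ) : ℂ) ^ 2 with hw1
  set u0 : ℕ → ℂ := fun p => if p = 0 then 0 else ((k.choose (p-1) : ℕ) : ℂ) ^ 2 with hu0
  set w0 : ℕ → ℂ := fun p => if p ≤ 1 then 0 else ((k.choose (p-2) : ℕ) : ℂ) ^ 2 with hw0
  have e1 : (a + b) * ∑ p ∈ Finset.range (k + 2),
      a ^ p * b ^ (k + 1 - p) * (((k+1).choose p : ℂ)) ^ 2
      = ∑ p ∈ Finset.range (k + 3), a ^ p * b ^ (k + 2 - p) *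
          (w1 p + (((k+1).choose p : ℂ)) ^ 2) := by
    have hA : a * ∑ p ∈ Finset.range (k + 2),
        a ^ p * b ^ (k + 1 - p) * (((k+1).choose p : ℂ)) ^ 2
        = ∑ p ∈ Finset.range (k + 3), a ^ p * b ^ (k + 2 - p) * w1 p := by
      rw [Finset.mul_sum]
      conv_rhs => rw [Finset.sum_range_succ']
      have hz0 : a ^ 0 * b ^ (k + 2 - 0) * w1 0 = 0 := by simp [hw1]
      rw [hz0, add_zero]
      apply Finset.sum_congr rfl
      intro p hp
      simp only [Finset.mem_range] at hp
      have hexp : k + 2 - (p + 1) = k + 1 - p := by omega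
      have hw : w1 (p + 1) = (((k+1).choose p : ℕ) : ℂ) ^ 2 := by simp [hw1]
      rw [hexp, hw]
      ring
    have hB : b * ∑ p ∈ Finset.range (k + 2),
        a ^ p * b ^ (k + 1 - p) * (((k+1).choose p : ℂ)) ^ 2
        = ∑ p ∈ Finset.range (k + 3), a ^ p * b ^ (k + 2 - p) *
            (((k+1).choose p : ℂ)) ^ 2 := by
      rw [Finset.mul_sum]
      conv_rhs => rw [Finset.sum_range_succ]
      rw [Nat.choose_eq_zero_of_lt (by omega : k + 1 < k + 2)]
      push_cast
      rw [show ((0:ℂ))^2 = 0 by ring, mul_zero, add_zero]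
      apply Finset.sum_congr rfl
      intro p hp
      simp only [Finset.mem_range] at hp
      have hexp : k + 2 - p = (k + 1 - p) + 1 := by omega
      rw [hexp, pow_succ]
      ring
    rw [add_mul, hA, hB, ← Finset.sum_add_distrib]
    apply Finset.sum_congr rfl
    intro p _
    ring
  have e0 : (a - b) ^ 2 * ∑ p ∈ Finset.range (k + 1),
      a ^ p * b ^ (k - p) * ((k.choose p : ℂ)) ^ 2
      = ∑ p ∈ Finset.range (k + 3), a ^ p * b ^ (k + 2 - p) *
          (w0 p - 2 * u0 p + ((k.choose p : ℂ)) ^ 2) := by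
    have hAA : a ^ 2 * ∑ p ∈ Finset.range (k + 1),
        a ^ p * b ^ (k - p) * ((k.choose p : ℂ)) ^ 2
        = ∑ p ∈ Finset.range (k + 3), a ^ p * b ^ (k + 2 - p) * w0 p := by
      rw [Finset.mul_sum]
      conv_rhs => rw [Finset.sum_range_succ', Finset.sum_range_succ']
      have hz0 : a ^ 0 * b ^ (k + 2 - 0) * w0 0 = 0 := by simp [hw0]
      have hz1 : a ^ (0 + 1) * b ^ (k + 2 - (0 + 1)) * w0 (0 + 1) = 0 := by simp [hw0]
      rw [hz0, hz1, add_zero, add_zero]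
      apply Finset.sum_congr rfl
      intro p hp
      simp only [Finset.mem_range] at hp
      have hexp : k + 2 - (p + 1 + 1) = k - p := by omega
      have hw : w0 (p + 1 + 1) = ((k.choose p : ℕ) : ℂ) ^ 2 := by simp [hw0]
      rw [hexp, hw]
      ring
    have hAB : a * b * ∑ p ∈ Finset.range (k + 1),
        a ^ p * b ^ (k - p) * ((k.choose p : ℂ)) ^ 2
        = ∑ p ∈ Finset.range (k + 3), a ^ p * b ^ (k + 2 - p) * u0 p := by
      rw [Finset.mul_sum]
      conv_rhs => rw [Finset.sum_range_succ']
      have hz0 : a ^ 0 * b ^ (k + 2 - 0) * u0 0 = 0 := by simp [hu0]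
      rw [hz0, add_zero]
      conv_rhs => rw [Finset.sum_range_succ]
      have hz1 : a ^ (k + 1 + 1) * b ^ (k + 2 - (k + 1 + 1)) * u0 (k + 1 + 1) = 0 := by
        simp [hu0, Nat.choose_eq_zero_of_lt (by omega : k < k + 1)]
      rw [hz1, add_zero]
      apply Finset.sum_congr rfl
      intro p hp
      simp only [Finset.mem_range] at hp
      have hexp : k + 2 - (p + 1) = (k - p) + 1 := by omega
      have hw : u0 (p + 1) = ((k.choose p : ℕ) : ℂ) ^ 2 := by simp [hu0]
      rw [hexp, hw, pow_succ]
      ring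
    have hBB : b ^ 2 * ∑ p ∈ Finset.range (k + 1),
        a ^ p * b ^ (k - p) * ((k.choose p : ℂ)) ^ 2
        = ∑ p ∈ Finset.range (k + 3), a ^ p * b ^ (k + 2 - p) *
            ((k.choose p : ℂ)) ^ 2 := by
      rw [Finset.mul_sum]
      conv_rhs => rw [Finset.sum_range_succ, Finset.sum_range_succ]
      rw [Nat.choose_eq_zero_of_lt (by omega : k < k + 1),
        Nat.choose_eq_zero_of_lt (by omega : k < k + 2)]
      push_cast
      rw [show ((0:ℂ))^2 = 0 by ring, mul_zero, mul_zero, add_zero, add_zero]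
      apply Finset.sum_congr rfl
      intro p hp
      simp only [Finset.mem_range] at hp
      have hexp : k + 2 - p = (k - p) + 2 := by omega
      rw [hexp, pow_add]
      ring
    have expand : (a - b) ^ 2 * ∑ p ∈ Finset.range (k + 1),
        a ^ p * b ^ (k - p) * ((k.choose p : ℂ)) ^ 2
        = a ^ 2 * (∑ p ∈ Finset.range (k + 1), a ^ p * b ^ (k - p) * ((k.choose p : ℂ)) ^ 2)
          - 2 * (a * b * ∑ p ∈ Finset.range (k + 1), a ^ p * b ^ (k - p) * ((k.choose p : ℂ)) ^ 2)
          + b ^ 2 * ∑ p ∈ Finset.range (k + 1), a ^ p * b ^ (k - p) * ((k.choose p : ℂ)) ^ 2 := by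
      ring
    rw [expand, hAA, hAB, hBB, Finset.mul_sum, ← Finset.sum_sub_distrib,
      ← Finset.sum_add_distrib]
    apply Finset.sum_congr rfl
    intro p _
    ring
  rw [show k + 2 + 1 = k + 3 by omega, show k + 1 + 1 = k + 2 by omega,
    mul_assoc, mul_assoc, e1, e0, Finset.mul_sum, Finset.mul_sum, Finset.mul_sum,
    ← Finset.sum_sub_distrib, ← Finset.sum_add_distrib]
  apply Finset.sum_eq_zero
  intro p _
  have coeff : ((k : ℂ) + 2) * (((k+2).choose p : ℂ)) ^ 2
      - (2 * ((k : ℂ) + 2) - 1) * (w1 p + (((k+1).choose p : ℂ)) ^ 2)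
      + (((k : ℂ) + 2) - 1) * (w0 p - 2 * u0 p + ((k.choose p : ℂ)) ^ 2) = 0 := by
    match p with
    | 0 =>
      simp only [hw1, hu0, hw0, if_pos, Nat.choose_zero_right]
      norm_num
      push_cast
      ring
    | 1 =>
      simp only [hw1, hu0, hw0]
      norm_num [Nat.choose_one_right]
      push_cast
      ring
    | (p + 2) =>
      have hwv1 : w1 (p + 2) = (((k+1).choose (p+1) : ℕ) : ℂ) ^ 2 := by simp [hw1]
      have huv : u0 (p + 2) = ((k.choose (p+1) : ℕ) : ℂ) ^ 2 := by simp [hu0]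
      have hwv0 : w0 (p + 2) = ((k.choose p : ℕ) : ℂ) ^ 2 := by simp [hw0]
      rw [hwv1, huv, hwv0]
      have pas2 : (((k+2).choose (p+2) : ℕ) : ℂ)
          = (((k.choose p : ℕ) : ℂ) + ((k.choose (p+1) : ℕ) : ℂ))
            + (((k.choose (p+1) : ℕ) : ℂ) + ((k.choose (p+2) : ℕ) : ℂ)) := by
        rw [show k + 2 = (k+1) + 1 from rfl, Nat.choose_succ_succ (k+1) (p+1)]
        rw [Nat.choose_succ_succ k p, Nat.choose_succ_succ k (p+1)]
        push_cast
        ring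
      have pas1a : (((k+1).choose (p+1) : ℕ) : ℂ)
          = ((k.choose p : ℕ) : ℂ) + ((k.choose (p+1) : ℕ) : ℂ) := by
        rw [Nat.choose_succ_succ k p]; push_cast; ring
      have pas1b : (((k+1).choose (p+2) : ℕ) : ℂ)
          = ((k.choose (p+1) : ℕ) : ℂ) + ((k.choose (p+2) : ℕ) : ℂ) := by
        rw [Nat.choose_succ_succ k (p+1)]; push_cast; ring
      rw [pas2, pas1a, pas1b]
      have r1 := choose_rel k p
      have r2 := choose_rel k (p+1)
      push_cast at r2
      have hq1 : (p : ℂ) + 1 ≠ 0 := Nat.cast_add_one_ne_zero p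
      have hq2 : (p : ℂ) + 2 ≠ 0 := by
        have h := Nat.cast_add_one_ne_zero (R := ℂ) (p + 1)
        push_cast at h
        intro hc; apply h; linear_combination hc
      have hkey := key_alg ((k.choose p : ℕ) : ℂ) ((k.choose (p+1) : ℕ) : ℂ)
        ((k.choose (p+2) : ℕ) : ℂ) (k : ℂ) (p : ℂ) hq1 hq2 r1 (by linear_combination r2)
      linear_combination hkey
  push_cast
  linear_combination (a ^ p * b ^ (k + 2 - p)) * coeff
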